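/- Every geodesic triangle in the hyperbolic plane is δ-thin with δ = log(1 + √2): for any point p on one side of the triangle, there exists a point q on one of the other two sides with d(p, q) ≤ log(1 + √2). -/

import Mathlib

set_option maxHeartbeats 1000000

open Real Set
open scoped UpperHalfPlane

noncomputable section

/-- A unit-speed geodesic from `x` to `y` in the hyperbolic plane, defined on
`[0, dist x y]`. -/
def IsGeodesicFromTo (γ : ℝ → ℍ) (x y : ℍ) : Prop :=
  γ 0 = x ∧ γ (dist x y) = y ∧
    ∀ s ∈ Icc 0 (dist x y), ∀ t ∈ Icc 0 (dist x y), dist (γ s) (γ t) = |s - t|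

/-- The geodesic segment (side) from `x` to `y` traced by `γ`. -/
def geodSeg (γ : ℝ → ℍ) (x y : ℍ) : Set ℍ := γ '' Icc 0 (dist x y)

namespace ThinAux
open UpperHalfPlane Complex

variable {a b c d : ℝ}

lemma den_ne_zero (h : 0 < a * d - b * c) (z : ℍ) : (c * (z:ℂ) + d) ≠ 0 := by
  intro hzero
  have him : c * z.im = 0 := by
    have := congrArg Complex.im hzero
    simpa using this
  have hc : c = 0 := by
    rcases mul_eq_zero.1 him with hc | hc
    · exact hc
    · exact absurd hc z.im_pos.ne'
  rw [hc] at hzero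
  simp only [Complex.ofReal_zero, zero_mul, zero_add] at hzero
  have hd : d = 0 := by exact_mod_cast hzero
  rw [hc, hd] at h; simp at h

lemma mob_im_aux (h : 0 < a * d - b * c) (z : ℍ) :
    ((a * (z:ℂ) + b) / (c * (z:ℂ) + d)).im
      = (a * d - b * c) * z.im / Complex.normSq (c * (z:ℂ) + d) := by
  rw [Complex.div_im]
  simp only [Complex.add_im, Complex.add_re, Complex.mul_im, Complex.mul_re,
    Complex.ofReal_re, Complex.ofReal_im, UpperHalfPlane.coe_im, UpperHalfPlane.coe_re]
  ring

lemma mob_im_pos (h : 0 < a * d - b * c) (z : ℍ) :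
    0 < ((a * (z:ℂ) + b) / (c * (z:ℂ) + d)).im := by
  rw [mob_im_aux h]
  have h1 : 0 < Complex.normSq (c * (z:ℂ) + d) :=
    Complex.normSq_pos.2 (den_ne_zero h z)
  have := z.im_pos
  positivity

/-- Möbius transformation of the upper half plane by a real matrix of positive determinant. -/
def mob (a b c d : ℝ) (h : 0 < a * d - b * c) (z : ℍ) : ℍ :=
  UpperHalfPlane.mk ((a * (z:ℂ) + b) / (c * (z:ℂ) + d)) (mob_im_pos h z)

lemma mob_coe (h : 0 < a * d - b * c) (z : ℍ) :
    (mob a b c d h z : ℂ) = (a * (z:ℂ) + b) / (c * (z:ℂ) + d) := rfl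

lemma mob_im (h : 0 < a * d - b * c) (z : ℍ) :
    (mob a b c d h z).im = (a * d - b * c) * z.im / Complex.normSq (c * (z:ℂ) + d) := by
  rw [← UpperHalfPlane.coe_im, mob_coe, mob_im_aux h]

lemma mob_sub (h : 0 < a * d - b * c) (z w : ℍ) :
    (mob a b c d h z : ℂ) - (mob a b c d h w : ℂ)
      = (a * d - b * c) * ((z:ℂ) - w) / ((c * (z:ℂ) + d) * (c * (w:ℂ) + d)) := by
  rw [mob_coe, mob_coe]
  rw [div_sub_div _ _ (den_ne_zero h z) (den_ne_zero h w)]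
  ring

lemma mob_dist (h : 0 < a * d - b * c) (z w : ℍ) :
    dist (mob a b c d h z) (mob a b c d h w) = dist z w := by
  have hz := den_ne_zero h z
  have hw := den_ne_zero h w
  rw [UpperHalfPlane.dist_eq, UpperHalfPlane.dist_eq]
  congr 1
  congr 1
  rw [Complex.dist_eq, Complex.dist_eq, mob_sub h, mob_im h, mob_im h]
  rw [show ((a:ℂ) * d - b * c) * ((z:ℂ) - w) = (((a*d - b*c : ℝ)):ℂ) * ((z:ℂ) - w) by
    push_cast; ring]
  rw [norm_div, norm_mul, norm_mul]
  have h1 : 0 < Complex.normSq (c * (z:ℂ) + d) := Complex.normSq_pos.2 hz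
  have h2 : 0 < Complex.normSq (c * (w:ℂ) + d) := Complex.normSq_pos.2 hw
  have hzim := z.im_pos
  have hwim := w.im_pos
  rw [show ((a*d - b*c) * z.im / Complex.normSq (c * (z:ℂ) + d))
        * ((a*d - b*c) * w.im / Complex.normSq (c * (w:ℂ) + d))
      = (z.im * w.im) * (((a*d-b*c) / (‖c * (z:ℂ) + d‖
            * ‖c * (w:ℂ) + d‖))^2) by
    rw [← Complex.sq_norm, ← Complex.sq_norm]
    field_simp]
  rw [Real.sqrt_mul (by positivity), Real.sqrt_sq (by positivity)]
  rw [Complex.norm_real, Real.norm_eq_abs, abs_of_pos h]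
  have key : ∀ (t K S D : ℝ), K ≠ 0 → S ≠ 0 → D ≠ 0 →
      D * t / K / (2 * (S * (D / K))) = t / (2 * S) := by
    intros t K S D hK hS hD
    field_simp
  exact key (‖(z:ℂ) - w‖) _ _ _
    (mul_ne_zero (norm_ne_zero_iff.2 hz) (norm_ne_zero_iff.2 hw))
    (Real.sqrt_ne_zero'.2 (by positivity)) h.ne' 

lemma cosh_dist_log (u v : ℝ) (hu : 0 < u) (hv : 0 < v) :
    Real.cosh (dist (Real.log u) (Real.log v)) = (u^2 + v^2) / (2*u*v) := by
  rw [Real.dist_eq, Real.cosh_abs, ← Real.log_div hu.ne' hv.ne',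
    Real.cosh_log (by positivity)]
  field_simp

lemma re_eq_of_dist_eq_dist_log {z w : ℍ}
    (hd : dist z w = dist (Real.log z.im) (Real.log w.im)) : z.re = w.re := by
  have h1 := UpperHalfPlane.cosh_dist' z w
  rw [hd, cosh_dist_log _ _ z.im_pos w.im_pos] at h1
  have hz := z.im_pos
  have hw := w.im_pos
  have h2 : (z.re - w.re)^2 = 0 := by
    field_simp at h1
    nlinarith
  have h3 : z.re - w.re = 0 := by
    have := sq_eq_zero_iff.mp h2
    linarith [this]
  linarith

lemma abs_between {x y w : ℝ} (h : |x - y| + |y - w| = |x - w|) :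
    min x w ≤ y ∧ y ≤ max x w := by
  constructor
  · rcases le_total x w with hc | hc
    · rw [min_eq_left hc]
      by_contra hxy; push_neg at hxy
      rw [abs_of_pos (by linarith), abs_of_neg (by linarith),
        _root_.abs_of_nonpos (by linarith)] at h
      linarith
    · rw [min_eq_right hc]
      by_contra hxy; push_neg at hxy
      rw [abs_of_pos (by linarith), abs_of_neg (by linarith),
        _root_.abs_of_nonneg (by linarith)] at h
      linarith
  · rcases le_total x w with hc | hc
    · rw [max_eq_right hc]
      by_contra hxy; push_neg at hxy
      rw [abs_of_neg (by linarith), abs_of_pos (by linarith),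
        _root_.abs_of_nonpos (by linarith)] at h
      linarith
    · rw [max_eq_left hc]
      by_contra hxy; push_neg at hxy
      rw [abs_of_neg (by linarith), abs_of_pos (by linarith),
        _root_.abs_of_nonneg (by linarith)] at h
      linarith

lemma axis_lemma {P W z : ℍ} (hP : P.re = W.re)
    (hadd : dist P z + dist z W = dist P W) :
    z.re = P.re ∧ min P.im W.im ≤ z.im ∧ z.im ≤ max P.im W.im := by
  have h1 : dist (Real.log P.im) (Real.log z.im) ≤ dist P z :=
    UpperHalfPlane.dist_log_im_le P z
  have h2 : dist (Real.log z.im) (Real.log W.im) ≤ dist z W :=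
    UpperHalfPlane.dist_log_im_le z W
  have h3 : dist P W = dist (Real.log P.im) (Real.log W.im) :=
    UpperHalfPlane.dist_of_re_eq hP
  have h4 : dist (Real.log P.im) (Real.log W.im) ≤
      dist (Real.log P.im) (Real.log z.im) + dist (Real.log z.im) (Real.log W.im) :=
    dist_triangle _ _ _
  have e1 : dist P z = dist (Real.log P.im) (Real.log z.im) := by linarith
  have e2 : dist z W = dist (Real.log z.im) (Real.log W.im) := by linarith
  have hre : z.re = P.re := (re_eq_of_dist_eq_dist_log e1).symm
  refine ⟨hre, ?_⟩
  have habs : |Real.log P.im - Real.log z.im| + |Real.log z.im - Real.log W.im|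
      = |Real.log P.im - Real.log W.im| := by
    rw [← Real.dist_eq, ← Real.dist_eq, ← Real.dist_eq, ← e1, ← e2, ← h3]
    exact hadd
  obtain ⟨hmin, hmax⟩ := abs_between habs
  constructor
  · rcases le_total P.im W.im with hc | hc
    · rw [min_eq_left hc]
      rw [min_eq_left (Real.log_le_log (by positivity) hc)] at hmin
      calc P.im = Real.exp (Real.log P.im) := (Real.exp_log P.im_pos).symm
        _ ≤ Real.exp (Real.log z.im) := Real.exp_le_exp.2 hmin
        _ = z.im := Real.exp_log z.im_pos
    · rw [min_eq_right hc]
      rw [min_eq_right (Real.log_le_log (by positivity) hc)] at hmin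
      calc W.im = Real.exp (Real.log W.im) := (Real.exp_log W.im_pos).symm
        _ ≤ Real.exp (Real.log z.im) := Real.exp_le_exp.2 hmin
        _ = z.im := Real.exp_log z.im_pos
  · rcases le_total P.im W.im with hc | hc
    · rw [max_eq_right hc]
      rw [max_eq_right (Real.log_le_log (by positivity) hc)] at hmax
      calc z.im = Real.exp (Real.log z.im) := (Real.exp_log z.im_pos).symm
        _ ≤ Real.exp (Real.log W.im) := Real.exp_le_exp.2 hmax
        _ = W.im := Real.exp_log W.im_pos
    · rw [max_eq_left hc]
      rw [max_eq_left (Real.log_le_log (by positivity) hc)] at hmax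
      calc z.im = Real.exp (Real.log z.im) := (Real.exp_log z.im_pos).symm
        _ ≤ Real.exp (Real.log P.im) := Real.exp_le_exp.2 hmax
        _ = P.im := Real.exp_log P.im_pos

/-- The point `i` of the upper half plane. -/
def ipt : ℍ := UpperHalfPlane.mk Complex.I (by simp)

lemma ipt_coe : (ipt : ℂ) = Complex.I := rfl
lemma ipt_re : ipt.re = 0 := by
  rw [← UpperHalfPlane.coe_re, ipt_coe, Complex.I_re]
lemma ipt_im : ipt.im = 1 := by
  rw [← UpperHalfPlane.coe_im, ipt_coe, Complex.I_im]

lemma geod_additive {γ : ℝ → ℍ} {X Y : ℍ} (hγ : IsGeodesicFromTo γ X Y)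
    {s : ℝ} (hs : s ∈ Icc 0 (dist X Y)) :
    dist X (γ s) + dist (γ s) Y = dist X Y := by
  have h1 := hγ.2.2 0 ⟨le_refl 0, dist_nonneg⟩ s hs
  have h2 := hγ.2.2 s hs (dist X Y) ⟨dist_nonneg, le_refl _⟩
  rw [hγ.1] at h1
  rw [hγ.2.1] at h2
  rw [h1, h2, abs_of_nonpos (by linarith [hs.1]), _root_.abs_of_nonpos (by linarith [hs.2])]
  ring

lemma geod_continuousOn {γ : ℝ → ℍ} {X Y : ℍ} (hγ : IsGeodesicFromTo γ X Y) :
    ContinuousOn γ (Icc 0 (dist X Y)) := by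
  apply LipschitzOnWith.continuousOn (K := 1)
  apply LipschitzOnWith.of_dist_le_mul
  intro s hs t ht
  rw [hγ.2.2 s hs t ht, Real.dist_eq]
  simp

lemma mob_special_re (c r : ℝ) (hdet : (0:ℝ) < 1*(c+r) - (r-c)*(-1)) (v : ℍ) :
    (mob 1 (r-c) (-1) (c+r) hdet v).re
      = (r^2 - Complex.normSq ((v:ℂ) - c)) / Complex.normSq (((-1:ℝ):ℂ) * (v:ℂ) + ((c+r:ℝ):ℂ)) := by
  rw [← UpperHalfPlane.coe_re, mob_coe, Complex.div_re]
  simp only [Complex.add_re, Complex.add_im, Complex.mul_re, Complex.mul_im,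
    Complex.ofReal_re, Complex.ofReal_im, Complex.sub_re, Complex.sub_im,
    Complex.normSq_apply, Complex.one_re, Complex.one_im, Complex.neg_re, Complex.neg_im]
  have him := v.im_pos
  field_simp
  ring

lemma circle_invariant (c r : ℝ) (hr : 0 < r) {γ : ℝ → ℍ} {X Y : ℍ}
    (hγ : IsGeodesicFromTo γ X Y)
    (hX : Complex.normSq ((X:ℂ) - c) = r^2) (hY : Complex.normSq ((Y:ℂ) - c) = r^2)
    {z : ℍ} (hz : z ∈ geodSeg γ X Y) : Complex.normSq ((z:ℂ) - c) = r^2 := by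
  obtain ⟨s, hs, rfl⟩ := hz
  have hadd := geod_additive hγ hs
  have hdet : (0:ℝ) < 1*(c+r) - (r-c)*(-1) := by linarith
  set M := mob 1 (r-c) (-1) (c+r) hdet with hM
  have hreX : (M X).re = 0 := by
    rw [hM, mob_special_re c r hdet X, hX, sub_self, zero_div]
  have hreY : (M Y).re = 0 := by
    rw [hM, mob_special_re c r hdet Y, hY, sub_self, zero_div]
  have haddM : dist (M X) (M (γ s)) + dist (M (γ s)) (M Y) = dist (M X) (M Y) := by
    rw [hM, mob_dist, mob_dist, mob_dist]; exact hadd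
  have hax := axis_lemma (hreX.trans hreY.symm) haddM
  have h0 : (M (γ s)).re = 0 := hax.1.trans hreX
  rw [hM, mob_special_re c r hdet (γ s), div_eq_zero_iff] at h0
  rcases h0 with h0 | h0
  · linarith
  · exact absurd h0 (Complex.normSq_pos.2 (den_ne_zero hdet (γ s))).ne'

lemma dist_ipt_le_delta {q : ℍ} (h2 : Real.sqrt 2 ≤ q.im) (h3 : q.re^2 + q.im^2 = 3) :
    dist ipt q ≤ Real.log (1 + Real.sqrt 2) := by
  have hs2 : (0:ℝ) < Real.sqrt 2 := by positivity
  have hs2sq : Real.sqrt 2 ^ 2 = 2 := Real.sq_sqrt (by norm_num)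
  have hδ : Real.cosh (Real.log (1 + Real.sqrt 2)) = Real.sqrt 2 := by
    rw [Real.cosh_log (by positivity)]
    have hinv : (1 + Real.sqrt 2)⁻¹ = Real.sqrt 2 - 1 := by
      exact (eq_inv_of_mul_eq_one_left (by nlinarith)).symm
    rw [hinv]; ring
  have hq := q.im_pos
  have hle : Real.cosh (dist ipt q) ≤ Real.sqrt 2 := by
    rw [UpperHalfPlane.cosh_dist', ipt_re, ipt_im]
    have he : (0 - q.re)^2 + 1^2 + q.im^2 = 4 := by nlinarith
    rw [he]
    rw [show (2:ℝ) * 1 * q.im = 2 * q.im by ring]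
    rw [div_le_iff₀ (by positivity)]
    nlinarith
  have hcc : |dist ipt q| ≤ |Real.log (1 + Real.sqrt 2)| := by
    rw [← Real.cosh_le_cosh]
    exact hle.trans_eq hδ.symm
  have hlog : 0 ≤ Real.log (1 + Real.sqrt 2) := Real.log_nonneg (by nlinarith)
  rwa [_root_.abs_of_nonneg dist_nonneg, _root_.abs_of_nonneg hlog] at hcc

lemma core {P W : ℍ} {γ : ℝ → ℍ} (hγ : IsGeodesicFromTo γ P W)
    (hPre : P.re = 0) (hPim : 1 + Real.sqrt 2 < P.im)
    (hW : Complex.normSq (W:ℂ) = 1) :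
    ∃ q ∈ geodSeg γ P W, dist ipt q ≤ Real.log (1 + Real.sqrt 2) := by
  have hs2 : (0:ℝ) < Real.sqrt 2 := by positivity
  have hs2sq : Real.sqrt 2 ^ 2 = 2 := Real.sq_sqrt (by norm_num)
  have hWsq : W.re^2 + W.im^2 = 1 := by
    have := hW
    rw [Complex.normSq_apply, UpperHalfPlane.coe_re, UpperHalfPlane.coe_im] at this
    nlinarith
  have hWmem : W ∈ geodSeg γ P W := ⟨dist P W, ⟨dist_nonneg, le_refl _⟩, hγ.2.1⟩
  rcases eq_or_ne W.re 0 with hξ | hξ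
  · -- W = i
    have hWim : W.im = 1 := by nlinarith [W.im_pos]
    have hWi : W = ipt := UpperHalfPlane.ext' (by rw [hξ, ipt_re]) (by rw [hWim, ipt_im])
    refine ⟨W, hWmem, ?_⟩
    rw [hWi, dist_self]
    exact Real.log_nonneg (by nlinarith)
  · set h := P.im with hh
    set ξ := W.re with hξdef
    set c := (1 - h^2)/(2*ξ) with hc
    have hξsq : ξ^2 < 1 := by nlinarith [W.im_pos]
    have hhpos : 0 < h := P.im_pos
    have hh3 : 3 < h^2 := by nlinarith
    have hcP : Complex.normSq ((P:ℂ) - c) = c^2 + h^2 := by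
      rw [Complex.normSq_apply]
      simp only [Complex.sub_re, Complex.sub_im, Complex.ofReal_re, Complex.ofReal_im,
        UpperHalfPlane.coe_re, UpperHalfPlane.coe_im]
      rw [hPre]
      ring
    have hcW : Complex.normSq ((W:ℂ) - c) = c^2 + h^2 := by
      rw [Complex.normSq_apply]
      simp only [Complex.sub_re, Complex.sub_im, Complex.ofReal_re, Complex.ofReal_im,
        UpperHalfPlane.coe_re, UpperHalfPlane.coe_im]
      have h2cξ : 2*c*ξ = 1 - h^2 := by
        rw [hc]; field_simp
      nlinarith
    set r := Real.sqrt (c^2 + h^2) with hr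
    have hrpos : 0 < r := Real.sqrt_pos.2 (by positivity)
    have hr2 : r^2 = c^2 + h^2 := Real.sq_sqrt (by positivity)
    have hcirc : ∀ z ∈ geodSeg γ P W, Complex.normSq ((z:ℂ) - c) = r^2 :=
      fun z hz => circle_invariant c r hrpos hγ (hcP.trans hr2.symm) (hcW.trans hr2.symm) hz
    set τ := (h^2 - 3)/(h^2 - 1) with hτ
    have hτpos : 0 < τ := by apply div_pos <;> linarith
    have hτlt : τ < 1 := by
      rw [hτ, div_lt_one (by linarith)]; linarith
    set x₀ := ξ * τ with hx₀
    -- IVT to find a point with re = x₀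
    have hcont : ContinuousOn (fun s => (γ s).re) (Icc 0 (dist P W)) :=
      UpperHalfPlane.continuous_re.comp_continuousOn (geod_continuousOn hγ)
    have hIcc : Icc (0:ℝ) (dist P W) = uIcc 0 (dist P W) := by
      rw [uIcc_of_le dist_nonneg]
    have hcont' : ContinuousOn (fun s => (γ s).re) (uIcc 0 (dist P W)) := by
      rwa [← hIcc]
    have hsub := intermediate_value_uIcc hcont'
    have hmem : x₀ ∈ uIcc ((γ 0).re) ((γ (dist P W)).re) := by
      rw [hγ.1, hγ.2.1, hPre]
      rcases lt_or_gt_of_ne hξ with hneg | hpos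
      · apply mem_uIcc.2; right
        constructor
        · nlinarith [mul_pos (neg_pos.2 hneg) (sub_pos.2 hτlt)]
        · nlinarith [mul_pos (neg_pos.2 hneg) hτpos]
      · apply mem_uIcc.2; left
        constructor
        · nlinarith [mul_pos hpos hτpos]
        · nlinarith [mul_pos hpos (sub_pos.2 hτlt)]
    obtain ⟨s, hsmem, hsre⟩ := hsub hmem
    rw [← hIcc] at hsmem
    set q := γ s with hq
    have hqseg : q ∈ geodSeg γ P W := ⟨s, hsmem, rfl⟩
    have hqre : q.re = x₀ := hsre
    have hqcirc := hcirc q hqseg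
    rw [Complex.normSq_apply] at hqcirc
    simp only [Complex.sub_re, Complex.sub_im, Complex.ofReal_re, Complex.ofReal_im,
      UpperHalfPlane.coe_re, UpperHalfPlane.coe_im] at hqcirc
    rw [hr2] at hqcirc
    -- q.re^2 - 2 c x₀ + q.im^2 = h^2 ; and h^2 + 2 c x₀ = 3
    have hc2 : 2*c*x₀ = (1-h^2)*τ := by
      rw [hc, hx₀]; field_simp
    have hτval : (1-h^2)*τ = -(h^2-3) := by
      have hne : h^2 - 1 ≠ 0 := by linarith
      rw [hτ]
      field_simp
      ring
    have hkey : h^2 + 2*c*x₀ = 3 := by rw [hc2, hτval]; ring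
    have hqim2 : q.im^2 = 3 - x₀^2 := by
      have hexp : x₀^2 - 2*c*x₀ + q.im^2 = h^2 := by
        rw [← hqre]; nlinarith [hqcirc]
      linarith
    have hx₀sq : x₀^2 < 1 := by
      rw [hx₀, mul_pow]
      nlinarith
    have hq3 : q.re^2 + q.im^2 = 3 := by rw [hqre]; linarith
    have hqimge : Real.sqrt 2 ≤ q.im := by
      have h2le : 2 ≤ q.im^2 := by linarith
      calc Real.sqrt 2 ≤ Real.sqrt (q.im^2) := Real.sqrt_le_sqrt h2le
        _ = q.im := Real.sqrt_sq q.im_pos.le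
    exact ⟨q, hqseg, dist_ipt_le_delta hqimge hq3⟩

lemma geod_dist_from_start {γ : ℝ → ℍ} {X Y : ℍ} (hγ : IsGeodesicFromTo γ X Y)
    {s : ℝ} (hs : s ∈ Icc 0 (dist X Y)) : dist X (γ s) = s := by
  have h1 := hγ.2.2 0 ⟨le_refl 0, dist_nonneg⟩ s hs
  rw [hγ.1] at h1
  rw [h1, abs_of_nonpos (by linarith [hs.1])]
  ring

lemma geod_restrict {γ : ℝ → ℍ} {X Y : ℍ} (hγ : IsGeodesicFromTo γ X Y)
    {u : ℝ} (hu : u ∈ Icc 0 (dist X Y)) :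
    IsGeodesicFromTo γ X (γ u) ∧ geodSeg γ X (γ u) ⊆ geodSeg γ X Y := by
  have hd : dist X (γ u) = u := geod_dist_from_start hγ hu
  constructor
  · refine ⟨hγ.1, by rw [hd], ?_⟩
    intro s hs t ht
    rw [hd] at hs ht
    exact hγ.2.2 s ⟨hs.1, hs.2.trans hu.2⟩ t ⟨ht.1, ht.2.trans hu.2⟩
  · rintro z ⟨s, hs, hz⟩
    rw [hd] at hs
    exact ⟨s, ⟨hs.1, hs.2.trans hu.2⟩, hz⟩

lemma geod_rev {γ : ℝ → ℍ} {X Y : ℍ} (hγ : IsGeodesicFromTo γ X Y) :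
    IsGeodesicFromTo (fun t => γ (dist X Y - t)) Y X ∧
      geodSeg (fun t => γ (dist X Y - t)) Y X = geodSeg γ X Y := by
  have hd : dist Y X = dist X Y := dist_comm Y X
  constructor
  · refine ⟨?_, ?_, ?_⟩
    · simp only [sub_zero]; exact hγ.2.1
    · rw [hd]; simp only [sub_self]; exact hγ.1
    · intro s hs t ht
      rw [hd] at hs ht
      have h1 := hγ.2.2 (dist X Y - s) ⟨by linarith [hs.2], by linarith [hs.1]⟩
        (dist X Y - t) ⟨by linarith [ht.2], by linarith [ht.1]⟩
      simp only at h1 ⊢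
      rw [h1, show dist X Y - s - (dist X Y - t) = t - s by ring, abs_sub_comm]
  · unfold geodSeg
    rw [hd, show (fun t => γ (dist X Y - t)) = γ ∘ (fun t => dist X Y - t) from rfl,
      Set.image_comp, Set.image_const_sub_Icc]
    norm_num

lemma mob_geod {a b c d : ℝ} (h : 0 < a * d - b * c) {γ : ℝ → ℍ} {X Y : ℍ}
    (hγ : IsGeodesicFromTo γ X Y) :
    IsGeodesicFromTo (fun t => mob a b c d h (γ t)) (mob a b c d h X) (mob a b c d h Y) ∧
      geodSeg (fun t => mob a b c d h (γ t)) (mob a b c d h X) (mob a b c d h Y)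
        = mob a b c d h '' geodSeg γ X Y := by
  have hd : dist (mob a b c d h X) (mob a b c d h Y) = dist X Y := mob_dist h X Y
  constructor
  · refine ⟨by simp only []; rw [hγ.1], by simp only []; rw [hd, hγ.2.1], ?_⟩
    intro s hs t ht
    rw [hd] at hs ht
    simp only []
    rw [mob_dist]
    exact hγ.2.2 s hs t ht
  · unfold geodSeg
    rw [hd, show (fun t => mob a b c d h (γ t)) = (mob a b c d h) ∘ γ from rfl, Set.image_comp]

lemma inv_det : (0:ℝ) < 0 * 0 - (-1) * 1 := by norm_num

/-- The isometry z ↦ -1/z. -/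
def invmap (z : ℍ) : ℍ := mob 0 (-1) 1 0 inv_det z

lemma invmap_coe (z : ℍ) : (invmap z : ℂ) = -((z:ℂ))⁻¹ := by
  rw [invmap, mob_coe]
  push_cast
  rw [zero_mul, zero_add, one_mul, add_zero, neg_div, ← one_div, one_div]

lemma invmap_re (z : ℍ) : (invmap z).re = -z.re / Complex.normSq (z:ℂ) := by
  rw [← UpperHalfPlane.coe_re, invmap_coe, Complex.neg_re, Complex.inv_re,
    UpperHalfPlane.coe_re, neg_div]

lemma invmap_im (z : ℍ) : (invmap z).im = z.im / Complex.normSq (z:ℂ) := by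
  rw [← UpperHalfPlane.coe_im, invmap_coe, Complex.neg_im, Complex.inv_im,
    UpperHalfPlane.coe_im, neg_div, neg_neg]

lemma invmap_normSq (z : ℍ) : Complex.normSq (invmap z : ℂ) = (Complex.normSq (z:ℂ))⁻¹ := by
  rw [invmap_coe, Complex.normSq_neg, Complex.normSq_inv]

lemma invmap_ipt : invmap ipt = ipt := by
  apply UpperHalfPlane.ext
  rw [invmap_coe, ipt_coe, Complex.inv_I, neg_neg]

lemma invmap_dist (z w : ℍ) : dist (invmap z) (invmap w) = dist z w := mob_dist inv_det z w

lemma main {A B C : ℍ} {γ₂ γ₃ : ℝ → ℍ}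
    (h₂ : IsGeodesicFromTo γ₂ B C) (h₃ : IsGeodesicFromTo γ₃ C A)
    (hAre : A.re = 0) (hBre : B.re = 0) (hA : A.im ≤ 1) (hB : 1 ≤ B.im) :
    ∃ q ∈ geodSeg γ₂ B C ∪ geodSeg γ₃ C A,
      dist ipt q ≤ Real.log (1 + Real.sqrt 2) := by
  have hs2 : (0:ℝ) < Real.sqrt 2 := by positivity
  set δ := Real.log (1 + Real.sqrt 2) with hδdef
  have hexpδ : Real.exp δ = 1 + Real.sqrt 2 := Real.exp_log (by positivity)
  have hBmem : B ∈ geodSeg γ₂ B C := ⟨0, ⟨le_refl 0, dist_nonneg⟩, h₂.1⟩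
  have hAmem : A ∈ geodSeg γ₃ C A := ⟨dist C A, ⟨dist_nonneg, le_refl _⟩, h₃.2.1⟩
  by_cases hdA : dist ipt A ≤ δ
  · exact ⟨A, Or.inr hAmem, hdA⟩
  by_cases hdB : dist ipt B ≤ δ
  · exact ⟨B, Or.inl hBmem, hdB⟩
  push_neg at hdA hdB
  -- convert to bounds on imaginary parts
  have hdistA : dist ipt A = |Real.log A.im| := by
    rw [UpperHalfPlane.dist_of_re_eq (ipt_re.trans hAre.symm), ipt_im, Real.log_one,
      Real.dist_eq, zero_sub, abs_neg]
  have hdistB : dist ipt B = |Real.log B.im| := by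
    rw [UpperHalfPlane.dist_of_re_eq (ipt_re.trans hBre.symm), ipt_im, Real.log_one,
      Real.dist_eq, zero_sub, abs_neg]
  have hAim : A.im < (1 + Real.sqrt 2)⁻¹ := by
    have h1 : |Real.log A.im| = -Real.log A.im :=
      abs_of_nonpos (Real.log_nonpos A.im_pos.le hA)
    have h2 : Real.log A.im < -δ := by rw [hdistA, h1] at hdA; linarith
    calc A.im = Real.exp (Real.log A.im) := (Real.exp_log A.im_pos).symm
      _ < Real.exp (-δ) := Real.exp_lt_exp.2 h2
      _ = (1 + Real.sqrt 2)⁻¹ := by rw [Real.exp_neg, hexpδ]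
  have hBim : 1 + Real.sqrt 2 < B.im := by
    have h1 : |Real.log B.im| = Real.log B.im :=
      _root_.abs_of_nonneg (Real.log_nonneg hB)
    have h2 : δ < Real.log B.im := by rw [hdistB, h1] at hdB; exact hdB
    calc 1 + Real.sqrt 2 = Real.exp δ := hexpδ.symm
      _ < Real.exp (Real.log B.im) := Real.exp_lt_exp.2 h2
      _ = B.im := Real.exp_log B.im_pos
  have hnA : Complex.normSq (A:ℂ) = A.im^2 := by
    rw [Complex.normSq_apply, UpperHalfPlane.coe_re, UpperHalfPlane.coe_im, hAre]
    ring
  have hnB : Complex.normSq (B:ℂ) = B.im^2 := by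
    rw [Complex.normSq_apply, UpperHalfPlane.coe_re, UpperHalfPlane.coe_im, hBre]
    ring
  have hAim1 : A.im < 1 := lt_of_lt_of_le hAim (by
    rw [inv_le_one_iff₀]; right; linarith)
  by_cases hC : Complex.normSq (C:ℂ) ≤ 1
  · -- crossing of the unit circle happens on side B→C
    have hcont : ContinuousOn (fun s => Complex.normSq ((γ₂ s : ℂ))) (Icc 0 (dist B C)) :=
      Complex.continuous_normSq.comp_continuousOn
        (UpperHalfPlane.continuous_coe.comp_continuousOn (geod_continuousOn h₂))
    have hIcc : Icc (0:ℝ) (dist B C) = uIcc 0 (dist B C) := by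
      rw [uIcc_of_le dist_nonneg]
    have hsub := intermediate_value_uIcc (by rwa [hIcc] at hcont)
    have h1mem : (1:ℝ) ∈ uIcc (Complex.normSq ((γ₂ 0 : ℂ)))
        (Complex.normSq ((γ₂ (dist B C) : ℂ))) := by
      rw [h₂.1, h₂.2.1]
      apply mem_uIcc.2
      right
      exact ⟨hC, by rw [hnB]; nlinarith⟩
    obtain ⟨u, humem, hu1⟩ := hsub h1mem
    rw [← hIcc] at humem
    obtain ⟨hres, hsubseg⟩ := geod_restrict h₂ humem
    obtain ⟨q, hq, hqd⟩ := core hres hBre hBim (by exact hu1)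
    exact ⟨q, Or.inl (hsubseg hq), hqd⟩
  · -- crossing happens on side C→A; use the inversion z ↦ -1/z
    push_neg at hC
    have hcont : ContinuousOn (fun s => Complex.normSq ((γ₃ s : ℂ))) (Icc 0 (dist C A)) :=
      Complex.continuous_normSq.comp_continuousOn
        (UpperHalfPlane.continuous_coe.comp_continuousOn (geod_continuousOn h₃))
    have hIcc : Icc (0:ℝ) (dist C A) = uIcc 0 (dist C A) := by
      rw [uIcc_of_le dist_nonneg]
    have hsub := intermediate_value_uIcc (by rwa [hIcc] at hcont)
    have h1mem : (1:ℝ) ∈ uIcc (Complex.normSq ((γ₃ 0 : ℂ)))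
        (Complex.normSq ((γ₃ (dist C A) : ℂ))) := by
      rw [h₃.1, h₃.2.1]
      apply mem_uIcc.2
      right
      exact ⟨by rw [hnA]; nlinarith [A.im_pos, hAim1], hC.le⟩
    obtain ⟨u, humem, hu1⟩ := hsub h1mem
    rw [← hIcc] at humem
    -- reverse γ₃ to run from A to C
    obtain ⟨hrev, hrevseg⟩ := geod_rev h₃
    set rev := fun t => γ₃ (dist C A - t) with hrevdef
    have hu'mem : dist C A - u ∈ Icc 0 (dist A C) := by
      rw [dist_comm A C]
      exact ⟨by linarith [humem.2], by linarith [humem.1]⟩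
    obtain ⟨hres, hsubseg⟩ := geod_restrict hrev hu'mem
    have hweq : rev (dist C A - u) = γ₃ u := by
      rw [hrevdef]; simp only []; congr 1; ring
    rw [hweq] at hres hsubseg
    -- transport by the inversion
    obtain ⟨hgι, hsegι⟩ := mob_geod inv_det hres
    have hιAre : (invmap A).re = 0 := by
      rw [invmap_re, hAre, neg_zero, zero_div]
    have hιAim : 1 + Real.sqrt 2 < (invmap A).im := by
      rw [invmap_im, hnA]
      have h1 : A.im / A.im^2 = 1 / A.im := by
        rw [sq]; rw [div_mul_eq_div_div]; rw [div_self A.im_pos.ne']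
      rw [h1, lt_div_iff₀ A.im_pos]
      have h2 := mul_lt_mul_of_pos_right hAim (by positivity : (0:ℝ) < 1 + Real.sqrt 2)
      rw [inv_mul_cancel₀ (by positivity : (1 + Real.sqrt 2) ≠ 0)] at h2
      linarith
    have hιWn : Complex.normSq ((invmap (γ₃ u)) : ℂ) = 1 := by
      rw [invmap_normSq, show Complex.normSq ((γ₃ u : ℍ):ℂ) = 1 from hu1]
      norm_num
    obtain ⟨q', hq', hqd'⟩ := core hgι hιAre hιAim hιWn
    rw [hsegι] at hq'
    obtain ⟨q, hq, rfl⟩ := hq'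
    refine ⟨q, Or.inr ?_, ?_⟩
    · rw [← hrevseg]
      exact hsubseg hq
    · calc dist ipt q = dist (invmap ipt) (invmap q) := (invmap_dist ipt q).symm
        _ = dist ipt (invmap q) := by rw [invmap_ipt]
        _ ≤ δ := hqd'

lemma iso_geod {T : ℍ → ℍ} (hT : ∀ z w, dist (T z) (T w) = dist z w)
    {γ : ℝ → ℍ} {X Y : ℍ} (hγ : IsGeodesicFromTo γ X Y) :
    IsGeodesicFromTo (fun t => T (γ t)) (T X) (T Y) ∧
      geodSeg (fun t => T (γ t)) (T X) (T Y) = T '' geodSeg γ X Y := by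
  have hd : dist (T X) (T Y) = dist X Y := hT X Y
  constructor
  · refine ⟨by simp only []; rw [hγ.1], by simp only []; rw [hd, hγ.2.1], ?_⟩
    intro s hs t ht
    rw [hd] at hs ht
    simp only []
    rw [hT]
    exact hγ.2.2 s hs t ht
  · unfold geodSeg
    rw [hd, show (fun t => T (γ t)) = T ∘ γ from rfl, Set.image_comp]

lemma scale_coe (k : ℝ) (hdet : 0 < k * 1 - 0 * 0) (z : ℍ) :
    (mob k 0 0 1 hdet z : ℂ) = k * z := by
  rw [mob_coe]
  push_cast
  rw [zero_mul, zero_add, add_zero, div_one]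

lemma scale_re (k : ℝ) (hdet : 0 < k * 1 - 0 * 0) (z : ℍ) :
    (mob k 0 0 1 hdet z).re = k * z.re := by
  rw [← UpperHalfPlane.coe_re, scale_coe]
  simp [Complex.mul_re]

lemma scale_im (k : ℝ) (hdet : 0 < k * 1 - 0 * 0) (z : ℍ) :
    (mob k 0 0 1 hdet z).im = k * z.im := by
  rw [← UpperHalfPlane.coe_im, scale_coe]
  simp [Complex.mul_im]

lemma normalize (A B : ℍ) : ∃ T : ℍ → ℍ,
    (∀ z w, dist (T z) (T w) = dist z w) ∧ (T A).re = 0 ∧ (T B).re = 0 := by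
  rcases eq_or_ne A.re B.re with hre | hre
  · have hdet : (0:ℝ) < 1 * 1 - (-A.re) * 0 := by norm_num
    have hcoe : ∀ z : ℍ, (mob 1 (-A.re) 0 1 hdet z : ℂ) = (z:ℂ) - A.re := by
      intro z
      rw [mob_coe]
      push_cast
      rw [zero_mul, zero_add, div_one, one_mul]
      ring
    refine ⟨mob 1 (-A.re) 0 1 hdet, fun z w => mob_dist hdet z w, ?_, ?_⟩
    · rw [← UpperHalfPlane.coe_re, hcoe A, Complex.sub_re, Complex.ofReal_re,
        UpperHalfPlane.coe_re, sub_self]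
    · rw [← UpperHalfPlane.coe_re, hcoe B, Complex.sub_re, Complex.ofReal_re,
        UpperHalfPlane.coe_re, ← hre, sub_self]
  · set c₀ := (Complex.normSq (A:ℂ) - Complex.normSq (B:ℂ)) / (2 * (A.re - B.re)) with hc₀
    have hAne : ((A:ℂ) - c₀) ≠ 0 := by
      intro hzero
      have := congrArg Complex.im hzero
      simp only [Complex.sub_im, Complex.ofReal_im, UpperHalfPlane.coe_im, Complex.zero_im,
        sub_zero] at this
      exact A.im_ne_zero this
    have hApos : 0 < Complex.normSq ((A:ℂ) - c₀) := Complex.normSq_pos.2 hAne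
    set r₀ := Real.sqrt (Complex.normSq ((A:ℂ) - c₀)) with hr₀def
    have hr₀ : 0 < r₀ := Real.sqrt_pos.2 hApos
    have hr₀sq : r₀^2 = Complex.normSq ((A:ℂ) - c₀) := Real.sq_sqrt hApos.le
    have h2c : 2 * c₀ * (A.re - B.re) = Complex.normSq (A:ℂ) - Complex.normSq (B:ℂ) := by
      have hd0 : A.re - B.re ≠ 0 := sub_ne_zero.2 hre
      rw [hc₀]
      field_simp
    have hBc : Complex.normSq ((B:ℂ) - c₀) = r₀^2 := by
      rw [hr₀sq, Complex.normSq_apply, Complex.normSq_apply]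
      simp only [Complex.sub_re, Complex.sub_im, Complex.ofReal_re, Complex.ofReal_im,
        UpperHalfPlane.coe_re, UpperHalfPlane.coe_im, sub_zero]
      have hnA : Complex.normSq (A:ℂ) = A.re^2 + A.im^2 := by
        rw [Complex.normSq_apply, UpperHalfPlane.coe_re, UpperHalfPlane.coe_im]; ring
      have hnB : Complex.normSq (B:ℂ) = B.re^2 + B.im^2 := by
        rw [Complex.normSq_apply, UpperHalfPlane.coe_re, UpperHalfPlane.coe_im]; ring
      rw [hnA, hnB] at h2c
      nlinarith
    have hdet : (0:ℝ) < 1 * (c₀ + r₀) - (r₀ - c₀) * (-1) := by linarith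
    refine ⟨mob 1 (r₀ - c₀) (-1) (c₀ + r₀) hdet, fun z w => mob_dist hdet z w, ?_, ?_⟩
    · rw [mob_special_re c₀ r₀ hdet A, hr₀sq, sub_self, zero_div]
    · rw [mob_special_re c₀ r₀ hdet B, hBc, sub_self, zero_div]

end ThinAux
end

open ThinAux

/-- Every geodesic triangle in the hyperbolic plane is `δ`-thin with
`δ = log (1 + √2)`: any point on one side is within distance `log (1 + √2)` of
one of the other two sides. -/
theorem hyperbolic_triangles_thin (A B C : ℍ) (γ₁ γ₂ γ₃ : ℝ → ℍ)
    (h₁ : IsGeodesicFromTo γ₁ A B) (h₂ : IsGeodesicFromTo γ₂ B C)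
    (h₃ : IsGeodesicFromTo γ₃ C A) :
    ∀ p ∈ geodSeg γ₁ A B, ∃ q ∈ geodSeg γ₂ B C ∪ geodSeg γ₃ C A,
      dist p q ≤ Real.log (1 + Real.sqrt 2) := by
  intro p hp
  obtain ⟨s, hs, rfl⟩ := hp
  set p := γ₁ s with hpdef
  have hadd : dist A p + dist p B = dist A B := geod_additive h₁ hs
  -- normalize : send A, B to the imaginary axis
  obtain ⟨T₁, hT₁iso, hTA, hTB⟩ := normalize A B
  have haddT : dist (T₁ A) (T₁ p) + dist (T₁ p) (T₁ B) = dist (T₁ A) (T₁ B) := by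
    rw [hT₁iso, hT₁iso, hT₁iso]; exact hadd
  obtain ⟨hpre, hpmin, hpmax⟩ := axis_lemma (hTA.trans hTB.symm) haddT
  -- scale so that the image of p is i
  set k := ((T₁ p).im)⁻¹ with hkdef
  have hk : 0 < k := inv_pos.2 (T₁ p).im_pos
  have hdetk : (0:ℝ) < k * 1 - 0 * 0 := by linarith
  set T : ℍ → ℍ := fun z => mob k 0 0 1 hdetk (T₁ z) with hTdef
  have hTiso : ∀ z w, dist (T z) (T w) = dist z w := by
    intro z w
    rw [hTdef]
    simp only []
    rw [mob_dist, hT₁iso]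
  have hk1 : k * (T₁ p).im = 1 := inv_mul_cancel₀ (T₁ p).im_pos.ne'
  have hTp : T p = ipt := by
    apply UpperHalfPlane.ext'
    · rw [hTdef]; simp only []; rw [scale_re, hpre, hTA, mul_zero, ipt_re]
    · rw [hTdef]; simp only []; rw [scale_im, hk1, ipt_im]
  have hTAre : (T A).re = 0 := by
    rw [hTdef]; simp only []; rw [scale_re, hTA, mul_zero]
  have hTBre : (T B).re = 0 := by
    rw [hTdef]; simp only []; rw [scale_re, hTB, mul_zero]
  have hTAim : (T A).im = k * (T₁ A).im := by
    rw [hTdef]; simp only []; rw [scale_im]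
  have hTBim : (T B).im = k * (T₁ B).im := by
    rw [hTdef]; simp only []; rw [scale_im]
  rcases le_total (T₁ A).im (T₁ B).im with hc | hc
  · -- A below, B above
    have hA1 : (T A).im ≤ 1 := by
      rw [hTAim, ← hk1]
      have : (T₁ A).im ≤ (T₁ p).im := by
        rw [min_eq_left hc] at hpmin; exact hpmin
      exact mul_le_mul_of_nonneg_left this hk.le
    have hB1 : 1 ≤ (T B).im := by
      rw [hTBim, ← hk1]
      have : (T₁ p).im ≤ (T₁ B).im := by
        rw [max_eq_right hc] at hpmax; exact hpmax
      exact mul_le_mul_of_nonneg_left this hk.le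
    obtain ⟨hg₂, hseg₂⟩ := iso_geod hTiso h₂
    obtain ⟨hg₃, hseg₃⟩ := iso_geod hTiso h₃
    obtain ⟨q', hq'mem, hq'd⟩ := main hg₂ hg₃ hTAre hTBre hA1 hB1
    have hdq : ∀ q : ℍ, q' = T q → dist p q ≤ Real.log (1 + Real.sqrt 2) := by
      intro q hq
      calc dist p q = dist (T p) (T q) := (hTiso p q).symm
        _ = dist ipt q' := by rw [hTp, hq]
        _ ≤ _ := hq'd
    rcases hq'mem with hmem | hmem
    · rw [hseg₂] at hmem
      obtain ⟨q, hq, hqeq⟩ := hmem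
      exact ⟨q, Or.inl hq, hdq q hqeq.symm⟩
    · rw [hseg₃] at hmem
      obtain ⟨q, hq, hqeq⟩ := hmem
      exact ⟨q, Or.inr hq, hdq q hqeq.symm⟩
  · -- B below, A above : swap roles using reversed geodesics
    have hA1 : (T B).im ≤ 1 := by
      rw [hTBim, ← hk1]
      have : (T₁ B).im ≤ (T₁ p).im := by
        rw [min_eq_right hc] at hpmin; exact hpmin
      exact mul_le_mul_of_nonneg_left this hk.le
    have hB1 : 1 ≤ (T A).im := by
      rw [hTAim, ← hk1]
      have : (T₁ p).im ≤ (T₁ A).im := by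
        rw [max_eq_left hc] at hpmax; exact hpmax
      exact mul_le_mul_of_nonneg_left this hk.le
    obtain ⟨hrev₂, hrevseg₂⟩ := geod_rev h₂
    obtain ⟨hrev₃, hrevseg₃⟩ := geod_rev h₃
    obtain ⟨hg₂, hseg₂⟩ := iso_geod hTiso hrev₃
    obtain ⟨hg₃, hseg₃⟩ := iso_geod hTiso hrev₂
    obtain ⟨q', hq'mem, hq'd⟩ := main hg₂ hg₃ hTBre hTAre hA1 hB1
    have hdq : ∀ q : ℍ, q' = T q → dist p q ≤ Real.log (1 + Real.sqrt 2) := by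
      intro q hq
      calc dist p q = dist (T p) (T q) := (hTiso p q).symm
        _ = dist ipt q' := by rw [hTp, hq]
        _ ≤ _ := hq'd
    rcases hq'mem with hmem | hmem
    · rw [hseg₂] at hmem
      obtain ⟨q, hq, hqeq⟩ := hmem
      rw [hrevseg₃] at hq
      exact ⟨q, Or.inr hq, hdq q hqeq.symm⟩
    · rw [hseg₃] at hmem
      obtain ⟨q, hq, hqeq⟩ := hmem
      rw [hrevseg₂] at hq
      exact ⟨q, Or.inl hq, hdq q hqeq.symm⟩
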